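/- For all τ, ζ ∈ ℂ with Im τ > 0: (1 − e^{−2πiζ})·P(τ,ζ) = (1 − e^{2πiζ})·P(τ,−ζ); P(τ, ζ+1) = P(τ, ζ); and P(τ, ζ+τ) = P(τ, −ζ). -/

import Mathlib

set_option maxHeartbeats 1600000

open Complex Filter

/-- If some factor vanishes, the product converges (to 0). -/
lemma aux_mult_of_zero {f : ℕ → ℂ} (h : ∃ n, f n = 0) : Multipliable f := by
  obtain ⟨n0, hn0⟩ := h
  refine ⟨0, ?_⟩
  have hev : ∀ᶠ s : Finset ℕ in atTop, (0 : ℂ) = ∏ i ∈ s, f i := by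
    filter_upwards [Filter.eventually_ge_atTop ({n0} : Finset ℕ)] with s hs
    exact (Finset.prod_eq_zero (hs (Finset.mem_singleton_self n0)) hn0).symm
  exact Tendsto.congr' hev tendsto_const_nhds

lemma aux_mult_one_add {f : ℕ → ℂ} (hf : Summable f) :
    Multipliable (fun n => 1 + f n) := by
  by_cases h0 : ∃ n, 1 + f n = 0
  · exact aux_mult_of_zero h0
  push_neg at h0
  have hlog : Summable (fun n => Complex.log (1 + f n)) := by
    have hsmall : ∀ᶠ n in atTop, ‖f n‖ < 1/2 :=
      NormedAddCommGroup.tendsto_nhds_zero.mp hf.tendsto_atTop_zero (1/2) (by norm_num)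
    refine Summable.of_norm_bounded_eventually_nat (g := fun n => 3/2 * ‖f n‖)
      (hf.norm.mul_left _) ?_
    filter_upwards [hsmall] with n hn
    exact Complex.norm_log_one_add_half_le_self hn.le
  exact Complex.multipliable_one_add_of_summable hf

lemma aux_mult_geom {q : ℂ} (hq : ‖q‖ < 1) (a : ℂ) :
    Multipliable (fun n : ℕ => 1 - a * q ^ n) := by
  have hs : Summable (fun n : ℕ => -(a * q ^ n)) :=
    ((summable_geometric_of_norm_lt_one hq).mul_left a).neg
  simpa [sub_eq_add_neg] using aux_mult_one_add hs

lemma aux_mult_geom' {q : ℂ} (hq : ‖q‖ < 1) (a : ℂ) :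
    Multipliable (fun n : ℕ => 1 - a * q ^ (n + 1)) := by
  have := aux_mult_geom hq (a * q)
  refine this.congr fun n => ?_
  rw [pow_succ']
  ring_nf

/-- `P(τ,ζ) = q^{1/12} ∏_{n≥1} (1 - e^{-2πiζ} q^n)(1 - e^{2πiζ} q^{n-1})`, `q = e^{2πiτ}`. -/
noncomputable def Pfun (τ ζ : ℂ) : ℂ :=
  Complex.exp (Real.pi * Complex.I * τ / 6) *
    ∏' n : ℕ,
      ((1 - Complex.exp (-(2 * Real.pi * Complex.I * ζ)) *
            Complex.exp (2 * Real.pi * Complex.I * ((n : ℂ) + 1) * τ)) *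
        (1 - Complex.exp (2 * Real.pi * Complex.I * ζ) *
            Complex.exp (2 * Real.pi * Complex.I * (n : ℂ) * τ)))

theorem stmt_11 (τ ζ : ℂ) (hτ : 0 < τ.im) :
    (1 - Complex.exp (-(2 * Real.pi * Complex.I * ζ))) * Pfun τ ζ =
        (1 - Complex.exp (2 * Real.pi * Complex.I * ζ)) * Pfun τ (-ζ) ∧
      Pfun τ (ζ + 1) = Pfun τ ζ ∧
      Pfun τ (ζ + τ) = Pfun τ (-ζ) := by
  set q : ℂ := Complex.exp (2 * Real.pi * Complex.I * τ) with hqdef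
  set c : ℂ := Complex.exp (Real.pi * Complex.I * τ / 6) with hcdef
  have hq : ‖q‖ < 1 := by
    rw [hqdef, Complex.norm_exp]
    rw [Real.exp_lt_one_iff]
    have : (2 * (Real.pi : ℂ) * Complex.I * τ).re = -(2 * Real.pi * τ.im) := by
      simp [Complex.mul_re, Complex.mul_im]
    rw [this]
    have := Real.pi_pos
    nlinarith
  have hP : ∀ ξ : ℂ, Pfun τ ξ =
      c * ∏' n : ℕ, ((1 - Complex.exp (-(2 * Real.pi * Complex.I * ξ)) * q ^ (n + 1)) *
        (1 - Complex.exp (2 * Real.pi * Complex.I * ξ) * q ^ n)) := by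
    intro ξ
    unfold Pfun
    rw [← hcdef]
    congr 1
    refine tprod_congr fun n => ?_
    have h1 : Complex.exp (2 * Real.pi * Complex.I * ((n : ℂ) + 1) * τ) = q ^ (n + 1) := by
      rw [hqdef, ← Complex.exp_nat_mul]
      congr 1
      push_cast
      ring
    have h2 : Complex.exp (2 * Real.pi * Complex.I * (n : ℂ) * τ) = q ^ n := by
      rw [hqdef, ← Complex.exp_nat_mul]
      congr 1
      ring
    rw [h1, h2]
  set u : ℂ := Complex.exp (-(2 * Real.pi * Complex.I * ζ)) with hudef
  set v : ℂ := Complex.exp (2 * Real.pi * Complex.I * ζ) with hvdef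
  have huv : Complex.exp (-(2 * Real.pi * Complex.I * (-ζ))) = v := by
    rw [hvdef]; congr 1; ring
  have hvu : Complex.exp (2 * Real.pi * Complex.I * (-ζ)) = u := by
    rw [hudef]; congr 1; ring
  refine ⟨?_, ?_, ?_⟩
  · -- part 1
    rw [hP ζ, hP (-ζ), huv, hvu]
    have hA := aux_mult_geom' hq u
    have hB := aux_mult_geom hq v
    have hA' := aux_mult_geom' hq v
    have hB' := aux_mult_geom hq u
    rw [Multipliable.tprod_mul hA hB, Multipliable.tprod_mul hA' hB']
    have h1 : (∏' n : ℕ, (1 - u * q ^ n)) = (1 - u) * ∏' n : ℕ, (1 - u * q ^ (n + 1)) := by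
      have := tprod_eq_zero_mul' (f := fun n : ℕ => 1 - u * q ^ n) hA
      simpa using this
    have h2 : (∏' n : ℕ, (1 - v * q ^ n)) = (1 - v) * ∏' n : ℕ, (1 - v * q ^ (n + 1)) := by
      have := tprod_eq_zero_mul' (f := fun n : ℕ => 1 - v * q ^ n) hA'
      simpa using this
    calc (1 - u) * (c * ((∏' n : ℕ, (1 - u * q ^ (n + 1))) * ∏' n : ℕ, (1 - v * q ^ n)))
        = c * ((∏' n : ℕ, (1 - u * q ^ n)) * ∏' n : ℕ, (1 - v * q ^ n)) := by rw [h1]; ring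
      _ = (1 - v) * (c * ((∏' n : ℕ, (1 - v * q ^ (n + 1))) * ∏' n : ℕ, (1 - u * q ^ n))) := by
          rw [h2]; ring
  · -- part 2
    have k1 : Complex.exp (2 * Real.pi * Complex.I * (ζ + 1)) = v := by
      rw [show 2 * (Real.pi : ℂ) * Complex.I * (ζ + 1)
            = 2 * Real.pi * Complex.I * ζ + 2 * Real.pi * Complex.I by ring,
        Complex.exp_add, Complex.exp_two_pi_mul_I, mul_one, hvdef]
    have k2 : Complex.exp (-(2 * Real.pi * Complex.I * (ζ + 1))) = u := by
      rw [show -(2 * (Real.pi : ℂ) * Complex.I * (ζ + 1))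
            = -(2 * Real.pi * Complex.I * ζ) + -(2 * Real.pi * Complex.I) by ring,
        Complex.exp_add]
      have hone : Complex.exp (-(2 * (Real.pi : ℂ) * Complex.I)) = 1 := by
        rw [Complex.exp_neg, Complex.exp_two_pi_mul_I, inv_one]
      rw [hone, mul_one, ← hudef]
    rw [hP (ζ + 1), hP ζ, k1, k2]
  · -- part 3
    rw [hP (ζ + τ), hP (-ζ), huv, hvu]
    congr 1
    refine tprod_congr fun n => ?_
    have e1 : Complex.exp (-(2 * Real.pi * Complex.I * (ζ + τ))) * q ^ (n + 1) = u * q ^ n := by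
      rw [hqdef, hudef, ← Complex.exp_nat_mul, ← Complex.exp_nat_mul,
        ← Complex.exp_add, ← Complex.exp_add]
      congr 1
      push_cast
      ring
    have e2 : Complex.exp (2 * Real.pi * Complex.I * (ζ + τ)) * q ^ n = v * q ^ (n + 1) := by
      rw [hqdef, hvdef, ← Complex.exp_nat_mul, ← Complex.exp_nat_mul,
        ← Complex.exp_add, ← Complex.exp_add]
      congr 1
      push_cast
      ring
    rw [e1, e2]
    ring
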